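/- The Edwards-Sokal coupling: let G = (V,E) be a finite graph, β > 0, p = 1 - e^{-2β}. Sample ω from the FK percolation measure φ_{G,p,2}, then assign to each connected component of ω an independent uniform spin in {-1,+1}, and let σ_x be the spin of the component of x. Then σ is distributed according to the Ising measure μ_{G,β,0}. -/

import Mathlib

open Finset

/-- The subgraph of `G` consisting of the open edges of a percolation
configuration `ω ∈ {0,1}^E`. -/
def openGraph {V : Type*} [Fintype V] [DecidableEq V]
    (G : SimpleGraph V) [DecidableRel G.Adj] (ω : ↥G.edgeFinset → Bool) :
    SimpleGraph V where
  Adj x y := x ≠ y ∧ ∃ e : ↥G.edgeFinset, ω e = true ∧ (e : Sym2 V) = s(x, y)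
  symm := by
    constructor
    rintro x y ⟨hxy, e, hω, he⟩
    exact ⟨hxy.symm, e, hω, he.trans Sym2.eq_swap⟩
  loopless := ⟨fun x h => h.1 rfl⟩

/-- The number `k(ω)` of connected components of the subgraph `(V, {e : ω_e = 1})`. -/
noncomputable def numComponents {V : Type*} [Fintype V] [DecidableEq V]
    (G : SimpleGraph V) [DecidableRel G.Adj] (ω : ↥G.edgeFinset → Bool) : ℕ :=
  Nat.card (openGraph G ω).ConnectedComponent

/-- The number of open edges `|ω|`. -/
def numOpen {V : Type*} [Fintype V] [DecidableEq V]
    (G : SimpleGraph V) [DecidableRel G.Adj] (ω : ↥G.edgeFinset → Bool) : ℕ :=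
  (Finset.univ.filter fun e => ω e = true).card

/-- The FK percolation weight `p^{|ω|} (1-p)^{|E|-|ω|} q^{k(ω)}`. -/
noncomputable def fkWeight {V : Type*} [Fintype V] [DecidableEq V]
    (G : SimpleGraph V) [DecidableRel G.Adj] (p q : ℝ) (ω : ↥G.edgeFinset → Bool) : ℝ :=
  p ^ numOpen G ω * (1 - p) ^ (G.edgeFinset.card - numOpen G ω) * q ^ numComponents G ω

/-- The FK percolation expectation `φ_{G,p,q}[f]`. -/
noncomputable def fkExpect {V : Type*} [Fintype V] [DecidableEq V]
    (G : SimpleGraph V) [DecidableRel G.Adj] (p q : ℝ)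
    (f : (↥G.edgeFinset → Bool) → ℝ) : ℝ :=
  (∑ ω : ↥G.edgeFinset → Bool, f ω * fkWeight G p q ω) /
    (∑ ω : ↥G.edgeFinset → Bool, fkWeight G p q ω)

/-- The spin value attached to a Boolean: `+1` or `-1`. -/
noncomputable def spin (b : Bool) : ℝ := if b then 1 else -1

/-- Interaction energy `Σ_{{x,y}∈E} σ_x σ_y` of a spin configuration. -/
noncomputable def interaction {V : Type*} [Fintype V] [DecidableEq V]
    (G : SimpleGraph V) [DecidableRel G.Adj] (σ : V → Bool) : ℝ :=
  ∑ e ∈ G.edgeFinset,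
    Sym2.lift ⟨fun x y => spin (σ x) * spin (σ y), fun _ _ => by ring⟩ e

section EdwardsSokal

open scoped Classical

variable {V : Type*} [Fintype V] [DecidableEq V]

/-- Agreement of a spin configuration on an edge. -/
def agreeB (σ : V → Bool) : Sym2 V → Bool :=
  Sym2.lift ⟨fun x y => σ x == σ y, fun x y => by show (σ x == σ y) = (σ y == σ x); cases σ x <;> cases σ y <;> rfl⟩

lemma agreeB_mk (σ : V → Bool) (x y : V) : agreeB σ s(x, y) = (σ x == σ y) := rfl

lemma spin_lift (σ : V → Bool) (e : Sym2 V) :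
    Sym2.lift ⟨fun x y => spin (σ x) * spin (σ y), fun _ _ => by ring⟩ e
      = if agreeB σ e = true then 1 else -1 := by
  induction e using Sym2.ind with
  | _ x y =>
    rw [Sym2.lift_mk, agreeB_mk]
    cases hx : σ x <;> cases hy : σ y <;> simp [spin, hx, hy]

variable (G : SimpleGraph V) [DecidableRel G.Adj]

lemma compat_iff (σ : V → Bool) (ω : ↥G.edgeFinset → Bool) :
    (∀ x y : V, (openGraph G ω).Reachable x y → σ x = σ y) ↔
    (∀ e : ↥G.edgeFinset, ω e = true → agreeB σ (e : Sym2 V) = true) := by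
  constructor
  · intro h e hω
    have key : ∀ (e' : Sym2 V) (he' : e' ∈ G.edgeFinset),
        ω ⟨e', he'⟩ = true → agreeB σ e' = true := by
      intro e'
      induction e' using Sym2.ind with
      | _ x y =>
        intro he' hω'
        have hadj : G.Adj x y := by
          rw [SimpleGraph.mem_edgeFinset, SimpleGraph.mem_edgeSet] at he'
          exact he'
        have hreach : (openGraph G ω).Reachable x y :=
          SimpleGraph.Adj.reachable ⟨hadj.ne, ⟨⟨s(x, y), he'⟩, hω', rfl⟩⟩
        rw [agreeB_mk, beq_iff_eq]
        exact h x y hreach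
    have := key (e : Sym2 V) e.2
    simpa using this hω
  · intro h x y hr
    obtain ⟨w⟩ := hr
    induction w with
    | nil => rfl
    | cons ha _ ih =>
      obtain ⟨hne, e, hω, he⟩ := ha
      have h1 := h e hω
      rw [he, agreeB_mk, beq_iff_eq] at h1
      exact h1.trans ih

lemma card_compat (ω : ↥G.edgeFinset → Bool) :
    (Finset.univ.filter fun σ' : V → Bool =>
        ∀ x y : V, (openGraph G ω).Reachable x y → σ' x = σ' y).card
      = 2 ^ numComponents G ω := by
  have equiv1 : {σ' : V → Bool // ∀ x y : V, (openGraph G ω).Reachable x y → σ' x = σ' y}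
      ≃ ((openGraph G ω).ConnectedComponent → Bool) :=
    { toFun := fun s => SimpleGraph.ConnectedComponent.lift s.1 (fun x y w _ => s.2 x y ⟨w⟩)
      invFun := fun f => ⟨fun v => f ((openGraph G ω).connectedComponentMk v),
        fun x y hr => congrArg f (SimpleGraph.ConnectedComponent.eq.mpr hr)⟩
      left_inv := fun s => Subtype.ext (funext fun v => rfl)
      right_inv := fun f => funext fun c => by
        induction c using SimpleGraph.ConnectedComponent.ind with
        | _ v => rfl }
  calc (Finset.univ.filter fun σ' : V → Bool =>
        ∀ x y : V, (openGraph G ω).Reachable x y → σ' x = σ' y).card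
      = Nat.card {σ' : V → Bool // ∀ x y : V,
          (openGraph G ω).Reachable x y → σ' x = σ' y} := by
        rw [Nat.card_eq_fintype_card, Fintype.card_subtype]
    _ = Nat.card ((openGraph G ω).ConnectedComponent → Bool) := Nat.card_congr equiv1
    _ = Nat.card Bool ^ Nat.card (openGraph G ω).ConnectedComponent := Nat.card_fun
    _ = 2 ^ numComponents G ω := by rw [Nat.card_eq_fintype_card, Fintype.card_bool]; rfl

end EdwardsSokal

open scoped Classical in
/-- **Edwards–Sokal coupling**: sample `ω` from FK percolation with `q = 2` and
`p = 1 - e^{-2β}`, then colour each connected component of `ω` with an independent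
uniform spin. For every spin configuration `σ`, the probability of obtaining `σ`
(namely `Σ_ω φ(ω) 2^{-k(ω)} 𝟙(σ is constant on the components of ω)`) equals the
Ising probability `μ_{G,β,0}(σ)`. -/
theorem edwards_sokal_coupling {V : Type*} [Fintype V] [DecidableEq V]
    (G : SimpleGraph V) [DecidableRel G.Adj] (β : ℝ) (hβ : 0 < β)
    (p : ℝ) (hp : p = 1 - Real.exp (-2 * β)) (σ : V → Bool) :
    (∑ ω : ↥G.edgeFinset → Bool,
        fkWeight G p 2 ω * ((2 : ℝ)⁻¹ ^ numComponents G ω) *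
          (if ∀ x y : V, (openGraph G ω).Reachable x y → σ x = σ y then 1 else 0)) /
      (∑ ω : ↥G.edgeFinset → Bool, fkWeight G p 2 ω) =
    Real.exp (β * interaction G σ) /
      (∑ σ' : V → Bool, Real.exp (β * interaction G σ')) := by
  classical
  set c : ℝ := Real.exp β ^ G.edgeFinset.card with hc
  -- the Bernoulli weight as a product over edges
  have hW : ∀ ω : ↥G.edgeFinset → Bool,
      (∏ e : ↥G.edgeFinset, if ω e = true then p else 1 - p)
        = p ^ numOpen G ω * (1 - p) ^ (G.edgeFinset.card - numOpen G ω) := by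
    intro ω
    rw [Finset.prod_ite, Finset.prod_const, Finset.prod_const]
    have hcard : (Finset.univ.filter fun e : ↥G.edgeFinset => ω e = true).card
        = numOpen G ω := rfl
    have hsum := Finset.card_filter_add_card_filter_not
      (s := (Finset.univ : Finset ↥G.edgeFinset)) (fun e => ω e = true)
    have huniv : (Finset.univ : Finset ↥G.edgeFinset).card = G.edgeFinset.card := by
      rw [Finset.card_univ, Fintype.card_coe]
    rw [hcard]
    have key : (Finset.univ.filter fun e : ↥G.edgeFinset => ¬ ω e = true).card
        = G.edgeFinset.card - numOpen G ω := by
      rw [hcard] at hsum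
      omega
    rw [key]
  -- factorization of the compatible-sum over edges
  have hN : ∀ σ' : V → Bool,
      (∑ ω : ↥G.edgeFinset → Bool,
        (∏ e : ↥G.edgeFinset, if ω e = true then p else 1 - p) *
          (if ∀ x y : V, (openGraph G ω).Reachable x y → σ' x = σ' y then 1 else 0))
      = ∏ e : ↥G.edgeFinset, (if agreeB σ' (e : Sym2 V) = true then (1 : ℝ) else 1 - p) := by
    intro σ'
    have step1 : ∀ ω : ↥G.edgeFinset → Bool,
        (∏ e : ↥G.edgeFinset, if ω e = true then p else 1 - p) *
          (if ∀ x y : V, (openGraph G ω).Reachable x y → σ' x = σ' y then (1:ℝ) else 0)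
        = ∏ e : ↥G.edgeFinset,
            ((if ω e = true then p else 1 - p) *
              (if ω e = true → agreeB σ' (e : Sym2 V) = true then 1 else 0)) := by
      intro ω
      rw [Finset.prod_mul_distrib, Finset.prod_boole]
      have hcond : (∀ x y : V, (openGraph G ω).Reachable x y → σ' x = σ' y) ↔
          (∀ e ∈ (Finset.univ : Finset ↥G.edgeFinset),
            ω e = true → agreeB σ' (e : Sym2 V) = true) := by
        rw [compat_iff G σ' ω]; simp
      by_cases hcp : ∀ x y : V, (openGraph G ω).Reachable x y → σ' x = σ' y
      · rw [if_pos hcp, if_pos (hcond.mp hcp)]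
      · rw [if_neg hcp, if_neg (fun h => hcp (hcond.mpr h))]
    calc (∑ ω : ↥G.edgeFinset → Bool,
        (∏ e : ↥G.edgeFinset, if ω e = true then p else 1 - p) *
          (if ∀ x y : V, (openGraph G ω).Reachable x y → σ' x = σ' y then 1 else 0))
        = ∑ ω : ↥G.edgeFinset → Bool, ∏ e : ↥G.edgeFinset,
            ((if ω e = true then p else 1 - p) *
              (if ω e = true → agreeB σ' (e : Sym2 V) = true then 1 else 0)) :=
          Finset.sum_congr rfl fun ω _ => step1 ω
      _ = ∏ e : ↥G.edgeFinset, ∑ b : Bool,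
            ((if b = true then p else 1 - p) *
              (if b = true → agreeB σ' (e : Sym2 V) = true then 1 else 0)) := by
          rw [Finset.prod_univ_sum, Fintype.piFinset_univ]
      _ = ∏ e : ↥G.edgeFinset, (if agreeB σ' (e : Sym2 V) = true then (1:ℝ) else 1 - p) := by
          refine Finset.prod_congr rfl fun e _ => ?_
          rw [Fintype.sum_bool]
          cases h : agreeB σ' (e : Sym2 V) <;> simp [h] <;> ring
  -- numerator
  have hnum : (∑ ω : ↥G.edgeFinset → Bool,
        fkWeight G p 2 ω * ((2 : ℝ)⁻¹ ^ numComponents G ω) *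
          (if ∀ x y : V, (openGraph G ω).Reachable x y → σ x = σ y then 1 else 0))
      = ∏ e : ↥G.edgeFinset, (if agreeB σ (e : Sym2 V) = true then (1:ℝ) else 1 - p) := by
    rw [← hN σ]
    refine Finset.sum_congr rfl fun ω _ => ?_
    congr 1
    have h2 : (2:ℝ) ^ numComponents G ω * 2⁻¹ ^ numComponents G ω = 1 := by
      rw [← mul_pow]; norm_num
    calc fkWeight G p 2 ω * (2:ℝ)⁻¹ ^ numComponents G ω
        = (p ^ numOpen G ω * (1 - p) ^ (G.edgeFinset.card - numOpen G ω)) *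
            ((2:ℝ) ^ numComponents G ω * 2⁻¹ ^ numComponents G ω) := by
          unfold fkWeight; ring
      _ = ∏ e : ↥G.edgeFinset, if ω e = true then p else 1 - p := by
          rw [h2, mul_one, hW ω]
  -- denominator
  have hden : (∑ ω : ↥G.edgeFinset → Bool, fkWeight G p 2 ω)
      = ∑ σ' : V → Bool,
          ∏ e : ↥G.edgeFinset, (if agreeB σ' (e : Sym2 V) = true then (1:ℝ) else 1 - p) := by
    have h2 : ∀ ω : ↥G.edgeFinset → Bool, fkWeight G p 2 ω
        = ∑ σ' : V → Bool,
            (∏ e : ↥G.edgeFinset, if ω e = true then p else 1 - p) *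
              (if ∀ x y : V, (openGraph G ω).Reachable x y → σ' x = σ' y then 1 else 0) := by
      intro ω
      rw [← Finset.mul_sum, Finset.sum_boole, card_compat G ω, hW ω]
      unfold fkWeight
      push_cast
      ring
    rw [Finset.sum_congr rfl fun ω _ => h2 ω, Finset.sum_comm]
    exact Finset.sum_congr rfl fun σ' _ => hN σ'
  -- Ising side
  have hI : ∀ σ' : V → Bool, Real.exp (β * interaction G σ')
      = c * ∏ e : ↥G.edgeFinset, (if agreeB σ' (e : Sym2 V) = true then (1:ℝ) else 1 - p) := by
    intro σ'
    unfold interaction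
    rw [Finset.mul_sum, Real.exp_sum]
    have hpt : ∀ e ∈ G.edgeFinset,
        Real.exp (β * Sym2.lift ⟨fun x y => spin (σ' x) * spin (σ' y), fun _ _ => by ring⟩ e)
          = Real.exp β * (if agreeB σ' e = true then (1:ℝ) else 1 - p) := by
      intro e _
      rw [spin_lift]
      cases h : agreeB σ' e
      · simp only [Bool.false_eq_true, if_false]
        rw [hp]
        have : (1 : ℝ) - (1 - Real.exp (-2 * β)) = Real.exp (-2 * β) := by ring
        rw [this, ← Real.exp_add]
        congr 1
        ring
      · simp only [if_true, mul_one]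
    rw [Finset.prod_congr rfl hpt, Finset.prod_mul_distrib, Finset.prod_const, hc]
    congr 1
    exact (Finset.prod_coe_sort G.edgeFinset
      (fun e => if agreeB σ' e = true then (1:ℝ) else 1 - p)).symm
  have hc0 : c ≠ 0 := pow_ne_zero _ (Real.exp_ne_zero β)
  rw [hnum, hden, hI σ,
    show (∑ σ' : V → Bool, Real.exp (β * interaction G σ'))
        = c * ∑ σ' : V → Bool,
            ∏ e : ↥G.edgeFinset, (if agreeB σ' (e : Sym2 V) = true then (1:ℝ) else 1 - p) from by
      rw [Finset.mul_sum]; exact Finset.sum_congr rfl fun σ' _ => hI σ',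
    mul_div_mul_left _ _ hc0]
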